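/- Let clamp(x) = min(1, max(0, x)). Let c₁, c₂ < 0 and d₁, d₂ ∈ ℝ, and define BR₁(β) = clamp(c₁ β + d₁) and BR₂(β) = clamp(c₂ β + d₂). If c₁ c₂ < 1, then there is exactly one pair (α₁, α₂) ∈ [0,1]² with α₁ = BR₁(α₂) and α₂ = BR₂(α₁). -/

import Mathlib

/-- Clamp to `[0,1]`. -/
noncomputable def clamp01 (x : ℝ) : ℝ := min 1 (max 0 x)

lemma clamp01_mem (x : ℝ) : clamp01 x ∈ Set.Icc (0:ℝ) 1 :=
  ⟨le_min zero_le_one (le_max_left 0 x), min_le_left _ _⟩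

lemma clamp01_lip (x y : ℝ) : |clamp01 x - clamp01 y| ≤ |x - y| := by
  unfold clamp01
  have h1 := abs_min_sub_min_le_max 1 (max 0 x) 1 (max 0 y)
  rw [sub_self, abs_zero, max_eq_right (abs_nonneg (max 0 x - max 0 y)), max_comm (0:ℝ) x,
    max_comm (0:ℝ) y] at h1
  rw [max_comm (0:ℝ) x, max_comm (0:ℝ) y]
  exact h1.trans (abs_max_sub_max_le_abs x y 0)

/-- For clamped affine best responses with negative slopes whose product is
less than 1, there is a unique fixed point in `[0,1]²`. -/
theorem clamp_affine_unique_fixed_point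
    (c1 c2 d1 d2 : ℝ) (hc1 : c1 < 0) (hc2 : c2 < 0) (h : c1 * c2 < 1) :
    ∃! p : ℝ × ℝ, p ∈ Set.Icc (0 : ℝ) 1 ×ˢ Set.Icc (0 : ℝ) 1 ∧
      p.1 = clamp01 (c1 * p.2 + d1) ∧ p.2 = clamp01 (c2 * p.1 + d2) := by
  set F : ℝ → ℝ := fun α => clamp01 (c1 * clamp01 (c2 * α + d2) + d1) with hFdef
  have hk0 : 0 < c1 * c2 := mul_pos_of_neg_of_neg hc1 hc2
  have hF : ∀ a b, |F a - F b| ≤ (c1 * c2) * |a - b| := by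
    intro a b
    have l1 : |F a - F b| ≤ |(c1 * clamp01 (c2 * a + d2) + d1)
        - (c1 * clamp01 (c2 * b + d2) + d1)| := clamp01_lip _ _
    have e1 : (c1 * clamp01 (c2 * a + d2) + d1) - (c1 * clamp01 (c2 * b + d2) + d1)
        = c1 * (clamp01 (c2 * a + d2) - clamp01 (c2 * b + d2)) := by ring
    have l2 : |clamp01 (c2 * a + d2) - clamp01 (c2 * b + d2)| ≤ |c2 * (a - b)| := by
      have := clamp01_lip (c2 * a + d2) (c2 * b + d2)
      calc |clamp01 (c2 * a + d2) - clamp01 (c2 * b + d2)|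
          ≤ |(c2 * a + d2) - (c2 * b + d2)| := this
        _ = |c2 * (a - b)| := by ring_nf
    calc |F a - F b| ≤ |c1| * |clamp01 (c2 * a + d2) - clamp01 (c2 * b + d2)| := by
          rw [← abs_mul, ← e1]; exact l1
      _ ≤ |c1| * |c2 * (a - b)| := mul_le_mul_of_nonneg_left l2 (abs_nonneg _)
      _ = |c1 * c2| * |a - b| := by rw [abs_mul, abs_mul]; ring
      _ = (c1 * c2) * |a - b| := by rw [abs_of_pos hk0]
  -- contraction, fixed point
  set K : NNReal := ⟨c1 * c2, hk0.le⟩ with hKdef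
  have hC : ContractingWith K F := by
    constructor
    · exact_mod_cast h
    · exact LipschitzWith.of_dist_le_mul fun a b => by
        rw [Real.dist_eq, Real.dist_eq]; exact hF a b
  obtain ⟨α₀, hfix, -⟩ := hC.exists_fixedPoint (0:ℝ) (by simp [edist_ne_top])
  have hα : F α₀ = α₀ := hfix
  have huniq : ∀ x, F x = x → x = α₀ := by
    intro x hx
    have := hF x α₀
    rw [hx, hα] at this
    have habs : |x - α₀| = 0 := by nlinarith [abs_nonneg (x - α₀)]
    have := abs_eq_zero.mp habs
    linarith [sub_eq_zero.mp this]
  refine ⟨(α₀, clamp01 (c2 * α₀ + d2)), ⟨⟨?_, clamp01_mem _⟩, ?_, rfl⟩, ?_⟩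
  · rw [← hα]; exact clamp01_mem _
  · exact hα.symm
  · rintro ⟨q1, q2⟩ ⟨-, h1, h2⟩
    have hq : F q1 = q1 := by
      simp only [hFdef]
      rw [← h2, ← h1]
    have hq1 : q1 = α₀ := huniq _ hq
    subst hq1
    simp only [Prod.mk.injEq]
    exact ⟨trivial, h2⟩
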